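/- Let M be a spectral space and B a commutative ring. The canonical B-linear map Cons(M, ℤ) ⊗_ℤ B → Cons(M, B), sending φ ⊗ b to the function x ↦ φ(x)·b, is an isomorphism of B-modules. -/

import Mathlib

/-- A spectral space: quasi-compact, quasi-separated, sober, and the
quasi-compact open subsets form a basis of the topology. -/
def SpectralSpace' (X : Type*) [TopologicalSpace X] : Prop :=
  CompactSpace X ∧ QuasiSeparatedSpace X ∧ QuasiSober X ∧ T0Space X ∧
    TopologicalSpace.IsTopologicalBasis {U : Set X | IsOpen U ∧ IsCompact U}

/-- The constructible subsets: the smallest class of subsets containing the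
quasi-compact open subsets and stable under complements and finite unions
(hence also finite intersections). -/
inductive IsConstr {X : Type*} [TopologicalSpace X] : Set X → Prop
  | qcOpen : ∀ U : Set X, IsOpen U → IsCompact U → IsConstr U
  | compl : ∀ A : Set X, IsConstr A → IsConstr Aᶜ
  | union : ∀ A B : Set X, IsConstr A → IsConstr B → IsConstr (A ∪ B)

/-- A constructible function: there is a finite partition of the space into
locally closed constructible subsets on each of which the function is constant. -/
def IsConsFun {X : Type*} [TopologicalSpace X] {B : Type*} (φ : X → B) : Prop :=
  ∃ (n : ℕ) (P : Fin n → Set X),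
    (∀ i, IsLocallyClosed (P i) ∧ IsConstr (P i)) ∧
    (∀ x, ∃! i, x ∈ P i) ∧
    ∀ i, ∀ x ∈ P i, ∀ y ∈ P i, φ x = φ y

open scoped TensorProduct

section Aux

variable {M : Type*} [TopologicalSpace M]

open scoped Classical

lemma IsConstr.inter' {A B : Set M} (hA : IsConstr A) (hB : IsConstr B) :
    IsConstr (A ∩ B) := by
  have h := (IsConstr.union _ _ hA.compl hB.compl).compl
  rwa [Set.compl_union, compl_compl, compl_compl] at h

/-- A finite partition of `M` into locally closed constructible pieces. -/
def IsPart (n : ℕ) (P : Fin n → Set M) : Prop :=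
  (∀ i, IsLocallyClosed (P i) ∧ IsConstr (P i)) ∧ (∀ x : M, ∃! i, x ∈ P i)

lemma isPart_univ [CompactSpace M] : IsPart 1 (fun _ => (Set.univ : Set M)) := by
  refine ⟨fun i => ⟨isOpen_univ.isLocallyClosed,
      IsConstr.qcOpen _ isOpen_univ isCompact_univ⟩, fun x => ⟨0, trivial, fun j _ => ?_⟩⟩
  exact Subsingleton.elim j 0

lemma IsPart.refine {n m : ℕ} {P : Fin n → Set M} {Q : Fin m → Set M}
    (hP : IsPart n P) (hQ : IsPart m Q) :
    ∃ (k : ℕ) (R : Fin k → Set M), IsPart k R ∧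
      (∀ r, ∃ i, R r ⊆ P i) ∧ (∀ r, ∃ j, R r ⊆ Q j) := by
  refine ⟨m * n, fun r => P (finProdFinEquiv.symm r).2 ∩ Q (finProdFinEquiv.symm r).1,
    ⟨fun r => ⟨((hP.1 _).1).inter ((hQ.1 _).1),
      ((hP.1 _).2).inter' ((hQ.1 _).2)⟩, ?_⟩,
    fun r => ⟨_, Set.inter_subset_left⟩, fun r => ⟨_, Set.inter_subset_right⟩⟩
  intro x
  obtain ⟨i, hi, hiu⟩ := hP.2 x
  obtain ⟨j, hj, hju⟩ := hQ.2 x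
  refine ⟨finProdFinEquiv (j, i), by simp [hi, hj], ?_⟩
  intro r hr
  have h1 : (finProdFinEquiv.symm r).2 = i := hiu _ hr.1
  have h2 : (finProdFinEquiv.symm r).1 = j := hju _ hr.2
  apply finProdFinEquiv.symm.injective
  rw [Equiv.symm_apply_apply]
  exact Prod.ext h2 h1

lemma sum_ite_part {B : Type*} [CommRing B] {n : ℕ} {P : Fin n → Set M}
    (hP : IsPart n P) (c : Fin n → B) {x : M} {i₀ : Fin n} (hx : x ∈ P i₀) :
    (∑ i, c i * (if x ∈ P i then 1 else 0)) = c i₀ := by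
  rw [Finset.sum_eq_single i₀]
  · simp [hx]
  · intro i _ hne
    have hxi : x ∉ P i := fun h => hne ((hP.2 x).unique h hx)
    simp [hxi]
  · simp

lemma isConsFun_ind {n : ℕ} {P : Fin n → Set M} (hP : IsPart n P) (i : Fin n) :
    IsConsFun (fun x => if x ∈ P i then (1 : ℤ) else 0) := by
  refine ⟨n, P, hP.1, hP.2, fun j x hx y hy => ?_⟩
  by_cases hij : i = j
  · subst hij; simp [hx, hy]
  · have hxi : x ∉ P i := fun h => hij ((hP.2 x).unique h hx)
    have hyi : y ∉ P i := fun h => hij ((hP.2 y).unique h hy)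
    simp [hxi, hyi]

end Aux

/-- The canonical `B`-linear map `B ⊗_ℤ Cons(M, ℤ) → Cons(M, B)`, sending `b ⊗ φ` to
`x ↦ b · φ(x)`, is an isomorphism of `B`-modules: it exists, is injective, and its range
is exactly the set of `B`-valued constructible functions. -/
theorem consFun_baseChange
    {M : Type*} [TopologicalSpace M] (hM : SpectralSpace' M) (B : Type*) [CommRing B]
    (N : Submodule ℤ (M → ℤ)) (hN : (N : Set (M → ℤ)) = {φ : M → ℤ | IsConsFun φ}) :
    ∃ L : (B ⊗[ℤ] N) →ₗ[B] (M → B),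
      (∀ (b : B) (φ : N), L (b ⊗ₜ[ℤ] φ) = fun x => b * (((φ : M → ℤ) x : ℤ) : B)) ∧
      Function.Injective L ∧
      Set.range L = {ψ : M → B | IsConsFun ψ} := by
  classical
  haveI : CompactSpace M := hM.1
  have hmem : ∀ φ : M → ℤ, φ ∈ N ↔ IsConsFun φ := fun φ => by
    rw [← SetLike.mem_coe, hN]; rfl
  -- the linear map
  set f : N →ₗ[ℤ] (M → B) :=
    (LinearMap.compLeft (Int.castAddHom B).toIntLinearMap M) ∘ₗ N.subtype with hf
  set L : (B ⊗[ℤ] N) →ₗ[B] (M → B) := LinearMap.liftBaseChange B f with hLdef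
  have hf_apply : ∀ (φ : N) (x : M), f φ x = (((φ : M → ℤ) x : ℤ) : B) := by
    intro φ x; rfl
  have hL1 : ∀ (b : B) (φ : N),
      L (b ⊗ₜ[ℤ] φ) = fun x => b * (((φ : M → ℤ) x : ℤ) : B) := by
    intro b φ
    funext x
    rw [hLdef, LinearMap.liftBaseChange_tmul]
    simp [hf_apply, smul_eq_mul]
  -- indicator elements of N
  have hindmem : ∀ {n : ℕ} {P : Fin n → Set M}, IsPart n P → ∀ i,
      (fun x => if x ∈ P i then (1 : ℤ) else 0) ∈ N :=
    fun hP i => (hmem _).2 (isConsFun_ind hP i)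
  -- key representation lemma
  have key : ∀ t : B ⊗[ℤ] N, ∃ (n : ℕ) (P : Fin n → Set M) (_ : IsPart n P)
      (c : Fin n → B) (e : Fin n → N),
      (∀ i, (e i : M → ℤ) = fun x => if x ∈ P i then 1 else 0) ∧
      t = ∑ i, c i ⊗ₜ[ℤ] e i := by
    intro t
    obtain ⟨S, hS⟩ := TensorProduct.exists_finset t
    have refAll : ∃ (n : ℕ) (P : Fin n → Set M), IsPart n P ∧
        ∀ p ∈ S, ∀ i, ∀ x ∈ P i, ∀ y ∈ P i, (p.2 : M → ℤ) x = (p.2 : M → ℤ) y := by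
      clear hS
      induction S using Finset.induction_on with
      | empty => exact ⟨1, _, isPart_univ, by simp⟩
      | @insert a S' ha ih =>
        obtain ⟨m, Q, hQ, hcQ⟩ := ih
        obtain ⟨n₀, P₀, h1, h2, hconst⟩ := (hmem (a.2 : M → ℤ)).1 a.2.2
        obtain ⟨k, R, hR, hsubP, hsubQ⟩ := IsPart.refine ⟨h1, h2⟩ hQ
        refine ⟨k, R, hR, ?_⟩
        intro p hp i x hx y hy
        rcases Finset.mem_insert.mp hp with rfl | hp'
        · obtain ⟨i₀, hsub⟩ := hsubP i
          exact hconst i₀ x (hsub hx) y (hsub hy)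
        · obtain ⟨j₀, hsub⟩ := hsubQ i
          exact hcQ p hp' j₀ x (hsub hx) y (hsub hy)
    obtain ⟨n, P, hP, hconst⟩ := refAll
    set e : Fin n → N := fun i => ⟨_, hindmem hP i⟩ with he
    have hecoe : ∀ i, (e i : M → ℤ) = fun x => if x ∈ P i then 1 else 0 := fun i => rfl
    set v : (B × N) → Fin n → ℤ :=
      fun p i => if h : (P i).Nonempty then (p.2 : M → ℤ) h.choose else 0 with hv
    have hdecomp : ∀ p ∈ S, (p.2 : N) = ∑ i, (v p i) • e i := by
      intro p hp
      apply Subtype.ext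
      have hcoe : ((∑ i, v p i • e i : N) : M → ℤ) = ∑ i, v p i • (e i : M → ℤ) := by
        push_cast
        rfl
      rw [hcoe]
      funext x
      obtain ⟨i₀, hx, -⟩ := hP.2 x
      rw [Finset.sum_apply]
      have step : ∀ i, (v p i • (e i : M → ℤ)) x
          = v p i * (if x ∈ P i then 1 else 0) := by
        intro i; rw [hecoe i]; simp [smul_eq_mul]
      simp_rw [step]
      rw [sum_ite_part hP (fun i => v p i) hx]
      have hne : (P i₀).Nonempty := ⟨x, hx⟩
      rw [hv]
      simp only [dif_pos hne]
      exact (hconst p hp i₀ hne.choose hne.choose_spec x hx).symm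
    refine ⟨n, P, hP, fun i => ∑ p ∈ S, v p i • p.1, e, hecoe, ?_⟩
    calc t = ∑ p ∈ S, p.1 ⊗ₜ[ℤ] (p.2 : N) := hS
      _ = ∑ p ∈ S, ∑ i, (v p i • p.1) ⊗ₜ[ℤ] e i := by
          refine Finset.sum_congr rfl fun p hp => ?_
          rw [hdecomp p hp, TensorProduct.tmul_sum]
          refine Finset.sum_congr rfl fun i _ => ?_
          rw [TensorProduct.tmul_smul, TensorProduct.smul_tmul']
      _ = ∑ i, (∑ p ∈ S, v p i • p.1) ⊗ₜ[ℤ] e i := by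
          rw [Finset.sum_comm]
          exact Finset.sum_congr rfl fun i _ => (TensorProduct.sum_tmul _ _ _).symm
  -- evaluation of L on such representations
  have hL_sum : ∀ (n : ℕ) (P : Fin n → Set M) (c : Fin n → B) (e : Fin n → N),
      (∀ i, (e i : M → ℤ) = fun x => if x ∈ P i then 1 else 0) →
      ∀ x : M, L (∑ i, c i ⊗ₜ[ℤ] e i) x
        = ∑ i, c i * (if x ∈ P i then (1 : B) else 0) := by
    intro n P c e he x
    rw [map_sum, Finset.sum_apply]
    refine Finset.sum_congr rfl fun i _ => ?_
    rw [hL1 (c i) (e i)]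
    simp [he i, apply_ite (Int.cast : ℤ → B)]
  refine ⟨L, hL1, ?_, ?_⟩
  · -- injectivity
    refine (injective_iff_map_eq_zero L).mpr fun t ht => ?_
    obtain ⟨n, P, hP, c, e, he, rfl⟩ := key t
    refine Finset.sum_eq_zero fun i _ => ?_
    by_cases hne : (P i).Nonempty
    · obtain ⟨x, hx⟩ := hne
      have h0 : (0 : M → B) x = 0 := rfl
      rw [← ht] at h0
      rw [hL_sum n P c e he x, sum_ite_part hP c hx] at h0
      rw [h0, TensorProduct.zero_tmul]
    · have he0 : e i = 0 := by
        apply Subtype.ext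
        rw [he i]
        funext x
        have : x ∉ P i := fun h => hne ⟨x, h⟩
        simp [this]
      rw [he0, TensorProduct.tmul_zero]
  · -- range
    apply Set.Subset.antisymm
    · rintro _ ⟨t, rfl⟩
      obtain ⟨n, P, hP, c, e, he, rfl⟩ := key t
      refine ⟨n, P, hP.1, hP.2, fun i x hx y hy => ?_⟩
      rw [hL_sum n P c e he x, hL_sum n P c e he y,
        sum_ite_part hP c hx, sum_ite_part hP c hy]
    · intro ψ hψ
      obtain ⟨n, P, h1, h2, hconst⟩ := hψ
      have hP : IsPart n P := ⟨h1, h2⟩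
      set e : Fin n → N := fun i => ⟨_, hindmem hP i⟩ with he
      have hecoe : ∀ i, (e i : M → ℤ) = fun x => if x ∈ P i then 1 else 0 := fun i => rfl
      set c : Fin n → B := fun i => if h : (P i).Nonempty then ψ h.choose else 0 with hc
      refine ⟨∑ i, c i ⊗ₜ[ℤ] e i, ?_⟩
      funext x
      obtain ⟨i₀, hx, -⟩ := hP.2 x
      rw [hL_sum n P c e hecoe x, sum_ite_part hP c hx]
      have hne : (P i₀).Nonempty := ⟨x, hx⟩
      rw [hc]
      simp only [dif_pos hne]
      exact hconst i₀ hne.choose hne.choose_spec x hx
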